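/- arXiv:1302.5954 — 2 statements merged into one kernel-verified Lean document; each statement's English description precedes it below -/
import Mathlib

section
/- Let F : GL(n,F) → ℂ satisfy |F(k₁ a k₂)| ≤ C ∏_{i=1}^n min(a_i,a_i^{-1})^{(n+1)d/2} for all KAK decompositions (d = dim_ℝ F). Then for every p > 0 there exists C_p with |F(k₁ a k₂)| ≤ C_p · e^{-ρ log a} / (1 + ‖log a‖)^p, where e^{-ρ log a} = ∏_i a_i^{d(i-(n+1)/2)} and ‖log a‖ = (∑_i (log a_i)²)^{1/2}. -/
open Matrix Finset
noncomputable section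

set_option maxHeartbeats 1000000 in
/-- If `F : GL(n,F) → ℂ` satisfies `|F(k₁ a k₂)| ≤ C ∏ᵢ min(aᵢ,aᵢ⁻¹)^{(n+1)d/2}` over all
`KAK` decompositions (`d = dim_ℝ F`), then for every `p > 0` there is `C_p` with
`|F(k₁ a k₂)| ≤ C_p e^{-ρ log a} / (1 + ‖log a‖)^p`, where
`e^{-ρ log a} = ∏ᵢ aᵢ^{d(i-(n+1)/2)}` and `‖log a‖ = (∑ᵢ (log aᵢ)²)^{1/2}`. -/
theorem KAK_bound_implies_schwartz_decay {𝕜 : Type} [RCLike 𝕜] (n : ℕ) (hn : 1 ≤ n)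
    (F : Matrix (Fin n) (Fin n) 𝕜 → ℂ) (C : ℝ)
    (hF : ∀ k₁ k₂ : Matrix (Fin n) (Fin n) 𝕜,
      k₁ ∈ Matrix.unitaryGroup (Fin n) 𝕜 → k₂ ∈ Matrix.unitaryGroup (Fin n) 𝕜 →
      ∀ a : Fin n → ℝ, (∀ i, 0 < a i) →
        ‖F (k₁ * Matrix.diagonal (fun i => ((a i : ℝ) : 𝕜)) * k₂)‖ ≤
          C * ∏ i, (min (a i) (a i)⁻¹) ^
            (((n + 1 : ℝ) * (Module.finrank ℝ 𝕜 : ℝ)) / 2)) :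
    ∀ p : ℝ, 0 < p → ∃ Cp : ℝ,
      ∀ k₁ k₂ : Matrix (Fin n) (Fin n) 𝕜,
        k₁ ∈ Matrix.unitaryGroup (Fin n) 𝕜 → k₂ ∈ Matrix.unitaryGroup (Fin n) 𝕜 →
        ∀ a : Fin n → ℝ, (∀ i, 0 < a i) →
          ‖F (k₁ * Matrix.diagonal (fun i => ((a i : ℝ) : 𝕜)) * k₂)‖ ≤
            Cp * (∏ i, (a i) ^ ((Module.finrank ℝ 𝕜 : ℝ) *
                (((i : ℕ) + 1 : ℝ) - (n + 1 : ℝ) / 2))) /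
              (1 + Real.sqrt (∑ i, Real.log (a i) ^ 2)) ^ p := by
  intro p hp
  have hd1 : (1:ℝ) ≤ (Module.finrank ℝ 𝕜 : ℝ) := by
    exact_mod_cast Module.finrank_pos (R := ℝ) (M := 𝕜)
  set d : ℝ := (Module.finrank ℝ 𝕜 : ℝ) with hd
  have hd0 : (0:ℝ) ≤ d := by linarith
  set N : ℕ := max 1 ⌈p⌉₊ with hNdef
  refine ⟨max C 0 * (N:ℝ)^N, ?_⟩
  intro k₁ k₂ hk₁ hk₂ a ha
  have key := hF k₁ k₂ hk₁ hk₂ a ha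
  set X : ℝ := ‖F (k₁ * Matrix.diagonal (fun i => ((a i : ℝ) : 𝕜)) * k₂)‖ with hX
  set s := Real.sqrt (∑ i, Real.log (a i) ^ 2) with hs
  have hs0 : 0 ≤ s := Real.sqrt_nonneg _
  have h1s : (1:ℝ) ≤ 1 + s := by linarith
  set P : ℝ := ∏ i, (a i) ^ (d * (((i:ℕ) + 1 : ℝ) - (n + 1 : ℝ) / 2)) with hPdef
  have hP0 : (0:ℝ) < P :=
    Finset.prod_pos fun i _ => Real.rpow_pos_of_pos (ha i) _
  have hz : (0:ℝ) < (1 + s) ^ p := Real.rpow_pos_of_pos (by linarith) _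
  rw [le_div_iff₀ hz]
  set Q : ℝ := ∏ i, (min (a i) (a i)⁻¹) ^ (((n + 1 : ℝ) * d) / 2) with hQdef
  have hQ0 : (0:ℝ) ≤ Q :=
    Finset.prod_nonneg fun i _ =>
      Real.rpow_nonneg (le_min (ha i).le (inv_nonneg.mpr (ha i).le)) _
  have key' : X ≤ max C 0 * Q :=
    key.trans (mul_le_mul_of_nonneg_right (le_max_left _ _) hQ0)
  -- per-coordinate bound
  have hterm : ∀ i : Fin n, (min (a i) (a i)⁻¹) ^ (((n + 1 : ℝ) * d) / 2) ≤
      (a i) ^ (d * (((i:ℕ) + 1 : ℝ) - (n + 1 : ℝ) / 2)) * Real.exp (-(d * |Real.log (a i)|)) := by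
    intro i
    have hinv : (0:ℝ) < (a i)⁻¹ := inv_pos.mpr (ha i)
    have hcancel : a i * (a i)⁻¹ = 1 := mul_inv_cancel₀ (ha i).ne'
    have hmin : min (a i) (a i)⁻¹ = Real.exp (-|Real.log (a i)|) := by
      rcases le_total 1 (a i) with h | h
      · rw [abs_of_nonneg (Real.log_nonneg h), ← Real.log_inv, Real.exp_log hinv]
        exact min_eq_right (by nlinarith)
      · rw [abs_of_nonpos (Real.log_nonpos (ha i).le h), neg_neg, Real.exp_log (ha i)]
        exact min_eq_left (by nlinarith)
    have hai : a i = Real.exp (Real.log (a i)) := (Real.exp_log (ha i)).symm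
    rw [hmin]
    nth_rewrite 2 [hai]
    rw [Real.rpow_def_of_pos (Real.exp_pos _), Real.rpow_def_of_pos (Real.exp_pos _),
      Real.log_exp, Real.log_exp, ← Real.exp_add]
    apply Real.exp_le_exp.mpr
    set t := Real.log (a i) with ht
    have hc1 : ((i:ℕ) : ℝ) + 1 ≤ (n : ℝ) := by exact_mod_cast i.isLt
    have hc0 : (0:ℝ) ≤ ((i:ℕ) : ℝ) := Nat.cast_nonneg _
    rcases abs_cases t with ⟨h1, h2⟩ | ⟨h1, h2⟩ <;> rw [h1]
    · nlinarith [mul_nonneg (mul_nonneg hd0 h2) hc0]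
    · nlinarith [mul_nonneg (mul_nonneg hd0 (by linarith : (0:ℝ) ≤ -t))
        (by linarith : (0:ℝ) ≤ (n:ℝ) - (((i:ℕ):ℝ) + 1))]
  have hsum : s ≤ ∑ i, |Real.log (a i)| := by
    have hsq : (∑ i, Real.log (a i) ^ 2) ≤ (∑ i, |Real.log (a i)|) ^ 2 := by
      have := Finset.sum_sq_le_sq_sum_of_nonneg
        (s := Finset.univ) (f := fun i => |Real.log (a i)|)
        (fun i _ => abs_nonneg _)
      simpa [sq_abs] using this
    calc s ≤ Real.sqrt ((∑ i, |Real.log (a i)|) ^ 2) := Real.sqrt_le_sqrt hsq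
      _ = ∑ i, |Real.log (a i)| :=
        Real.sqrt_sq (Finset.sum_nonneg fun i _ => abs_nonneg _)
  have hA : Q ≤ P * Real.exp (-(d * s)) := by
    calc Q ≤ ∏ i, (a i) ^ (d * (((i:ℕ) + 1 : ℝ) - (n + 1 : ℝ) / 2)) *
            Real.exp (-(d * |Real.log (a i)|)) :=
          Finset.prod_le_prod
            (fun i _ => Real.rpow_nonneg (le_min (ha i).le (inv_nonneg.mpr (ha i).le)) _)
            (fun i _ => hterm i)
      _ = P * ∏ i, Real.exp (-(d * |Real.log (a i)|)) := Finset.prod_mul_distrib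
      _ = P * Real.exp (∑ i, -(d * |Real.log (a i)|)) := by rw [Real.exp_sum]
      _ ≤ P * Real.exp (-(d * s)) := by
          have hds : d * s ≤ ∑ i, d * |Real.log (a i)| := by
            rw [← Finset.mul_sum]
            exact mul_le_mul_of_nonneg_left hsum hd0
          have h' : (∑ i, -(d * |Real.log (a i)|)) ≤ -(d * s) := by
            rw [Finset.sum_neg_distrib]; linarith
          exact mul_le_mul_of_nonneg_left (Real.exp_le_exp.mpr h') hP0.le
  -- polynomial vs exponential
  have hN1 : (1:ℝ) ≤ (N:ℝ) := by exact_mod_cast le_max_left 1 ⌈p⌉₊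
  have hB : (1 + s) ^ p ≤ (N:ℝ)^N * Real.exp (d * s) := by
    have hpN : p ≤ (N:ℝ) := (Nat.le_ceil p).trans (by exact_mod_cast le_max_right 1 ⌈p⌉₊)
    have h1 : (1 + s) ^ p ≤ (1 + s) ^ (N:ℝ) := Real.rpow_le_rpow_of_exponent_le h1s hpN
    rw [Real.rpow_natCast] at h1
    have hN0 : (0:ℝ) < (N:ℝ) := by linarith
    have hNs : (N:ℝ) * (s / (N:ℝ)) = s := by field_simp
    have h2 : 1 + s ≤ (N:ℝ) * Real.exp (s / N) := by
      have he := Real.add_one_le_exp (s / (N:ℝ))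
      have hmul := mul_le_mul_of_nonneg_left he hN0.le
      rw [mul_add, hNs, mul_one] at hmul
      linarith
    have h3 : (1 + s) ^ N ≤ ((N:ℝ) * Real.exp (s / N)) ^ N :=
      pow_le_pow_left₀ (by linarith) h2 N
    rw [mul_pow, ← Real.exp_nat_mul, hNs] at h3
    have h4 : Real.exp s ≤ Real.exp (d * s) := Real.exp_le_exp.mpr (by nlinarith)
    calc (1 + s) ^ p ≤ (1 + s) ^ N := h1
      _ ≤ (N:ℝ)^N * Real.exp s := h3
      _ ≤ (N:ℝ)^N * Real.exp (d * s) :=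
          mul_le_mul_of_nonneg_left h4 (by positivity)
  have hE : Real.exp (-(d * s)) * Real.exp (d * s) = 1 := by
    rw [← Real.exp_add]; simp
  calc X * (1 + s) ^ p
      ≤ (max C 0 * (P * Real.exp (-(d * s)))) * ((N:ℝ)^N * Real.exp (d * s)) :=
        mul_le_mul (key'.trans (mul_le_mul_of_nonneg_left hA (le_max_right C 0))) hB hz.le
          (mul_nonneg (le_max_right C 0) (mul_nonneg hP0.le (Real.exp_nonneg _)))
    _ = max C 0 * (N:ℝ)^N * P * (Real.exp (-(d * s)) * Real.exp (d * s)) := by ring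
    _ = max C 0 * (N:ℝ)^N * P := by rw [hE, mul_one]
end
end

section
/- The map g ↦ (left (n+1)×n block of g) from SL(n+1,F) to M_{(n+1)×n}(F) is continuous, open onto its image (the rank-n matrices), and its fibers are exactly the right cosets gN where N is the subgroup of matrices [[I_n, X],[0,1]]. -/
open Matrix
noncomputable section

variable {𝕜 : Type} [RCLike 𝕜]

instance SLtop (n : ℕ) : TopologicalSpace (Matrix.SpecialLinearGroup (Fin n ⊕ Unit) 𝕜) :=
  TopologicalSpace.induced (fun g => (g : Matrix (Fin n ⊕ Unit) (Fin n ⊕ Unit) 𝕜))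
    inferInstance

/-- `b(g)`: the left `(n+1)×n` block (first `n` columns) of `g ∈ SL(n+1,F)`. -/
def blockMap (n : ℕ) (g : Matrix.SpecialLinearGroup (Fin n ⊕ Unit) 𝕜) :
    Matrix (Fin n ⊕ Unit) (Fin n) 𝕜 :=
  (g : Matrix (Fin n ⊕ Unit) (Fin n ⊕ Unit) 𝕜).submatrix id Sum.inl

namespace BMAux

variable (n : ℕ)

/-- extend `x` by an extra last column `v`. -/
def extc (x : Matrix (Fin n ⊕ Unit) (Fin n) 𝕜) (v : (Fin n ⊕ Unit) → 𝕜) :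
    Matrix (Fin n ⊕ Unit) (Fin n ⊕ Unit) 𝕜 :=
  Matrix.of fun i k => Sum.elim (x i) (fun _ => v i) k

/-- diagonal matrix with `1`s and final entry `d`. -/
def dg (d : 𝕜) : Matrix (Fin n ⊕ Unit) (Fin n ⊕ Unit) 𝕜 :=
  Matrix.diagonal (Sum.elim (fun _ => 1) (fun _ => d))

lemma det_dg (d : 𝕜) : (dg n d).det = d := by
  simp [dg, det_diagonal, Fintype.prod_sum_type]

lemma dg_one : dg n (1 : 𝕜) = 1 := by
  unfold dg
  congr 1
  funext k
  rcases k with j | u <;> rfl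

/-- local section of `blockMap`. -/
def secm (x : Matrix (Fin n ⊕ Unit) (Fin n) 𝕜) (v : (Fin n ⊕ Unit) → 𝕜) :
    Matrix (Fin n ⊕ Unit) (Fin n ⊕ Unit) 𝕜 :=
  extc n x v * dg n (det (extc n x v))⁻¹

lemma secm_submatrix (x : Matrix (Fin n ⊕ Unit) (Fin n) 𝕜) (v : (Fin n ⊕ Unit) → 𝕜) :
    (secm n x v).submatrix id Sum.inl = x := by
  ext i j
  simp [secm, dg, Matrix.mul_diagonal, extc]

lemma det_secm (x : Matrix (Fin n ⊕ Unit) (Fin n) 𝕜) (v : (Fin n ⊕ Unit) → 𝕜)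
    (h : det (extc n x v) ≠ 0) : det (secm n x v) = 1 := by
  rw [secm, det_mul, det_dg, mul_inv_cancel₀ h]

lemma mulVec_extc (x : Matrix (Fin n ⊕ Unit) (Fin n) 𝕜) (v : (Fin n ⊕ Unit) → 𝕜)
    (c : (Fin n ⊕ Unit) → 𝕜) :
    (extc n x v).mulVec c = x.mulVec (c ∘ Sum.inl) + c (Sum.inr ()) • v := by
  funext i
  simp [extc, Matrix.mulVec, dotProduct, Fintype.sum_sum_type, mul_comm]

lemma det_extc_ne_zero (x : Matrix (Fin n ⊕ Unit) (Fin n) 𝕜) (v : (Fin n ⊕ Unit) → 𝕜)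
    (hx : Function.Injective x.mulVecLin) (hv : v ∉ LinearMap.range x.mulVecLin) :
    det (extc n x v) ≠ 0 := by
  have hu : IsUnit (extc n x v) := by
    rw [← Matrix.mulVec_injective_iff_isUnit]
    have hker : ∀ c, (extc n x v).mulVec c = 0 → c = 0 := by
      intro c hc
      rw [mulVec_extc] at hc
      by_cases ha : c (Sum.inr ()) = 0
      · rw [ha, zero_smul, add_zero] at hc
        have : c ∘ Sum.inl = 0 := hx (by simpa using hc)
        funext k
        rcases k with j | u
        · exact congrFun this j
        · cases u; exact ha
      · exfalso
        apply hv
        refine ⟨(c (Sum.inr ()))⁻¹ • (-(c ∘ Sum.inl)), ?_⟩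
        have := congrArg (fun w => (c (Sum.inr ()))⁻¹ • (w - c (Sum.inr ()) • v)) hc
        simp only [add_sub_cancel_right, zero_sub, smul_neg, smul_smul,
          inv_mul_cancel₀ ha, one_smul] at this
        simp only [_root_.map_smul, map_neg, Matrix.mulVecLin_apply, smul_neg, this, neg_neg]
    intro c c' hcc
    have h0 : (extc n x v).mulVec (c - c') = 0 := by
      rw [Matrix.mulVec_sub, hcc, sub_self]
    exact sub_eq_zero.mp (hker _ h0)
  intro h0
  exact ((Matrix.isUnit_iff_isUnit_det _).mp hu).ne_zero h0

lemma rank_eq_of_inj (x : Matrix (Fin n ⊕ Unit) (Fin n) 𝕜)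
    (hx : Function.Injective x.mulVecLin) : x.rank = n := by
  rw [Matrix.rank, LinearMap.finrank_range_of_inj hx]; simp

lemma inj_of_rank_eq (x : Matrix (Fin n ⊕ Unit) (Fin n) 𝕜) (hx : x.rank = n) :
    Function.Injective x.mulVecLin := by
  rw [← LinearMap.ker_eq_bot]
  have h := LinearMap.finrank_range_add_finrank_ker x.mulVecLin
  rw [Matrix.rank] at hx
  simp [hx] at h
  exact h

lemma exists_not_mem_range (x : Matrix (Fin n ⊕ Unit) (Fin n) 𝕜) (hrank : x.rank = n) :
    ∃ v, v ∉ LinearMap.range x.mulVecLin := by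
  by_contra hv
  push_neg at hv
  have : LinearMap.range x.mulVecLin = ⊤ := by
    rw [eq_top_iff]; intro v _; exact hv v
  rw [Matrix.rank, this] at hrank
  simp at hrank

/-- the first `n` columns of an invertible matrix are injective as a linear map. -/
lemma inj_submatrix (A : Matrix (Fin n ⊕ Unit) (Fin n ⊕ Unit) 𝕜) (hA : IsUnit A) :
    Function.Injective (A.submatrix id Sum.inl).mulVecLin := by
  have hAi := Matrix.mulVec_injective_iff_isUnit.mpr hA
  intro c c' hcc
  simp only [Matrix.mulVecLin_apply] at hcc
  have key : ∀ c : Fin n → 𝕜,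
      (A.submatrix id Sum.inl).mulVec c = A.mulVec (Sum.elim c 0) := by
    intro c
    funext i
    simp [Matrix.mulVec, dotProduct, Fintype.sum_sum_type]
  rw [key, key] at hcc
  have := hAi hcc
  funext j
  exact congrFun this (Sum.inl j)

lemma coe_extc_blockMap (g : Matrix.SpecialLinearGroup (Fin n ⊕ Unit) 𝕜) :
    extc n (blockMap n g) (fun i => (g : Matrix (Fin n ⊕ Unit) (Fin n ⊕ Unit) 𝕜) i (Sum.inr ()))
      = (g : Matrix (Fin n ⊕ Unit) (Fin n ⊕ Unit) 𝕜) := by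
  ext i k
  rcases k with j | u
  · rfl
  · cases u; rfl

end BMAux

set_option maxHeartbeats 1600000 in
open BMAux in
/-- The map `g ↦ (first n columns of g)` from `SL(n+1,F)` to `M_{(n+1)×n}(F)` is
continuous, open onto its image (the rank-`n` matrices), and its fibers are exactly
the right cosets `gN`, `N = {[[Iₙ,X],[0,1]]}`. -/
theorem blockMap_continuous_open_fibers (n : ℕ) (hn : 1 ≤ n) :
    Continuous (blockMap (𝕜 := 𝕜) n) ∧
      IsOpenMap (Set.rangeFactorization (blockMap (𝕜 := 𝕜) n)) ∧
      Set.range (blockMap (𝕜 := 𝕜) n) =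
        {x : Matrix (Fin n ⊕ Unit) (Fin n) 𝕜 | x.rank = n} ∧
      ∀ g g' : Matrix.SpecialLinearGroup (Fin n ⊕ Unit) 𝕜,
        blockMap n g = blockMap n g' ↔
          ∃ h : Matrix.SpecialLinearGroup (Fin n ⊕ Unit) 𝕜,
            (∃ X : Fin n → 𝕜,
              (h : Matrix (Fin n ⊕ Unit) (Fin n ⊕ Unit) 𝕜) =
                Matrix.fromBlocks 1 (Matrix.of fun i (_ : Unit) => X i) 0 1) ∧
            g' = g * h := by
  have hcoe : Continuous
      (fun g : Matrix.SpecialLinearGroup (Fin n ⊕ Unit) 𝕜 =>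
        (g : Matrix (Fin n ⊕ Unit) (Fin n ⊕ Unit) 𝕜)) := continuous_induced_dom
  have hcont : Continuous (blockMap (𝕜 := 𝕜) n) := hcoe.matrix_submatrix id Sum.inl
  -- openness of blockMap into the ambient matrix space
  have hopen : ∀ U : Set (Matrix.SpecialLinearGroup (Fin n ⊕ Unit) 𝕜), IsOpen U →
      IsOpen (blockMap (𝕜 := 𝕜) n '' U) := by
    intro U hU
    obtain ⟨U', hU', hUeq⟩ := isOpen_induced_iff.mp hU
    rw [isOpen_iff_forall_mem_open]
    rintro x₀ ⟨g₀, hg₀U, hg₀⟩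
    set v : (Fin n ⊕ Unit) → 𝕜 :=
      fun i => (g₀ : Matrix (Fin n ⊕ Unit) (Fin n ⊕ Unit) 𝕜) i (Sum.inr ()) with hv
    have hdetc : Continuous fun x : Matrix (Fin n ⊕ Unit) (Fin n) 𝕜 => det (extc n x v) := by
      apply Continuous.matrix_det
      apply continuous_matrix
      intro i k
      rcases k with j | u
      · exact (continuous_apply_apply i j)
      · exact continuous_const
    have hW : IsOpen {x : Matrix (Fin n ⊕ Unit) (Fin n) 𝕜 | det (extc n x v) ≠ 0} :=
      isOpen_compl_iff.mpr (isClosed_singleton.preimage hdetc)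
    have hF : ContinuousOn (fun x => secm n x v)
        {x : Matrix (Fin n ⊕ Unit) (Fin n) 𝕜 | det (extc n x v) ≠ 0} := by
      have hext : Continuous fun x : Matrix (Fin n ⊕ Unit) (Fin n) 𝕜 => extc n x v := by
        apply continuous_matrix
        intro i k
        rcases k with j | u
        · exact (continuous_apply_apply i j)
        · exact continuous_const
      have hG : Continuous (fun p : Matrix (Fin n ⊕ Unit) (Fin n ⊕ Unit) 𝕜 × 𝕜 =>
          p.1 * dg n p.2) := by
        apply Continuous.matrix_mul continuous_fst
        unfold dg
        apply Continuous.matrix_diagonal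
        apply continuous_pi
        intro k
        rcases k with j | u
        · exact continuous_const
        · exact continuous_snd
      intro x hx
      apply ContinuousAt.continuousWithinAt
      exact hG.continuousAt.comp
        ((hext.continuousAt).prodMk ((hdetc.continuousAt).inv₀ hx))
    have hVopen : IsOpen ({x : Matrix (Fin n ⊕ Unit) (Fin n) 𝕜 | det (extc n x v) ≠ 0} ∩
        (fun x => secm n x v) ⁻¹' U') := ContinuousOn.isOpen_inter_preimage hF hW hU'
    have hext0 : extc n x₀ v = (g₀ : Matrix (Fin n ⊕ Unit) (Fin n ⊕ Unit) 𝕜) := by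
      rw [← hg₀, hv]
      exact coe_extc_blockMap n g₀
    have hdet0 : det (extc n x₀ v) = 1 := by rw [hext0]; exact g₀.2
    refine ⟨_, ?_, hVopen, ⟨?_, ?_⟩⟩
    · rintro x ⟨hx1, hx2⟩
      refine ⟨⟨secm n x v, det_secm n x v hx1⟩, ?_, secm_submatrix n x v⟩
      rw [← hUeq]
      exact hx2
    · show det (extc n x₀ v) ≠ 0
      simp [hdet0]
    · show secm n x₀ v ∈ U'
      rw [secm, hdet0, inv_one, dg_one, mul_one, hext0]
      rw [← hUeq] at hg₀U
      exact hg₀U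
  refine ⟨hcont, ?_, ?_, ?_⟩
  · -- open onto image
    intro U hU
    have himg : Set.rangeFactorization (blockMap (𝕜 := 𝕜) n) '' U =
        Subtype.val ⁻¹' (blockMap (𝕜 := 𝕜) n '' U) := by
      ext ⟨y, hy⟩
      simp only [Set.mem_image, Set.mem_preimage, Set.rangeFactorization]
      constructor
      · rintro ⟨g, hg, h⟩; exact ⟨g, hg, congrArg Subtype.val h⟩
      · rintro ⟨g, hg, hgy⟩; exact ⟨g, hg, Subtype.ext hgy⟩
    rw [himg]
    exact (hopen U hU).preimage continuous_subtype_val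
  · -- range
    ext x
    simp only [Set.mem_range, Set.mem_setOf_eq]
    constructor
    · rintro ⟨g, rfl⟩
      exact rank_eq_of_inj n _ (inj_submatrix n _ ((Matrix.isUnit_iff_isUnit_det _).mpr
        (by rw [g.2]; exact isUnit_one)))
    · intro hx
      have hinj := inj_of_rank_eq n x hx
      obtain ⟨v, hv⟩ := exists_not_mem_range n x hx
      have hdet := det_extc_ne_zero n x v hinj hv
      exact ⟨⟨secm n x v, det_secm n x v hdet⟩, secm_submatrix n x v⟩
  · -- fibers
    intro g g'
    constructor
    · intro hb
      set A := (g : Matrix (Fin n ⊕ Unit) (Fin n ⊕ Unit) 𝕜)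
      set H := ((g⁻¹ * g' : Matrix.SpecialLinearGroup (Fin n ⊕ Unit) 𝕜) :
        Matrix (Fin n ⊕ Unit) (Fin n ⊕ Unit) 𝕜)
      have hAH : A * H = (g' : Matrix (Fin n ⊕ Unit) (Fin n ⊕ Unit) 𝕜) := by
        have : g * (g⁻¹ * g') = g' := by group
        rw [show A * H = ((g * (g⁻¹ * g') : Matrix.SpecialLinearGroup (Fin n ⊕ Unit) 𝕜) :
            Matrix (Fin n ⊕ Unit) (Fin n ⊕ Unit) 𝕜) from
          (Matrix.SpecialLinearGroup.coe_mul _ _).symm, this]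
      have hAinj : Function.Injective A.mulVec :=
        Matrix.mulVec_injective_iff_isUnit.mpr
          ((Matrix.isUnit_iff_isUnit_det _).mpr (by rw [g.2]; exact isUnit_one))
      have hcol : ∀ k j, H k (Sum.inl j) = (1 : Matrix (Fin n ⊕ Unit) (Fin n ⊕ Unit) 𝕜) k (Sum.inl j) := by
        intro k j
        have h1 : A.mulVec (fun k => H k (Sum.inl j)) =
            A.mulVec (fun k => (1 : Matrix (Fin n ⊕ Unit) (Fin n ⊕ Unit) 𝕜) k (Sum.inl j)) := by
          funext i
          have hL : A.mulVec (fun k => H k (Sum.inl j)) i = (A * H) i (Sum.inl j) := by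
            simp [Matrix.mulVec, Matrix.mul_apply, dotProduct]
          have hR : A.mulVec (fun k => (1 : Matrix (Fin n ⊕ Unit) (Fin n ⊕ Unit) 𝕜) k (Sum.inl j)) i
              = A i (Sum.inl j) := by
            simp [Matrix.mulVec, dotProduct, Matrix.one_apply]
          rw [hL, hR, hAH]
          have := congrFun (congrFun hb i) j
          simpa [blockMap] using this.symm
        exact congrFun (hAinj h1) k
      -- blocks of H
      have h11 : H.toBlocks₁₁ = 1 := by
        ext i j
        have := hcol (Sum.inl i) j
        simpa [Matrix.toBlocks₁₁, Matrix.one_apply] using this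
      have h21 : H.toBlocks₂₁ = 0 := by
        ext u j
        have := hcol (Sum.inr u) j
        simpa [Matrix.toBlocks₂₁, Matrix.one_apply] using this
      have hHdet : H.det = 1 := (g⁻¹ * g').2
      have hHblocks : H = Matrix.fromBlocks H.toBlocks₁₁ H.toBlocks₁₂ H.toBlocks₂₁ H.toBlocks₂₂ :=
        (Matrix.fromBlocks_toBlocks H).symm
      have h22 : H.toBlocks₂₂ = 1 := by
        have hd : H.det = H.toBlocks₂₂ () () := by
          rw [hHblocks]
          rw [h11, h21, Matrix.det_fromBlocks_zero₂₁]
          simp [Matrix.det_unique]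
        ext u u'
        cases u; cases u'
        rw [Matrix.one_apply_eq, ← hd, hHdet]
      have hXeq : H = Matrix.fromBlocks 1
          (Matrix.of fun i (_ : Unit) => H (Sum.inl i) (Sum.inr ())) 0 1 := by
        ext i k
        rcases i with i | u <;> rcases k with j | u'
        · simpa [Matrix.fromBlocks_apply₁₁, Matrix.one_apply] using hcol (Sum.inl i) j
        · cases u'; rfl
        · simpa [Matrix.fromBlocks_apply₂₁, Matrix.one_apply] using hcol (Sum.inr u) j
        · cases u; cases u'
          have := congrFun (congrFun h22 ()) ()
          simpa [Matrix.fromBlocks_apply₂₂, Matrix.toBlocks₂₂, Matrix.one_apply] using this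
      exact ⟨g⁻¹ * g', ⟨fun i => H (Sum.inl i) (Sum.inr ()), hXeq⟩, by group⟩
    · rintro ⟨h, ⟨X, hX⟩, rfl⟩
      funext i j
      have : ((g * h : Matrix.SpecialLinearGroup (Fin n ⊕ Unit) 𝕜) :
          Matrix (Fin n ⊕ Unit) (Fin n ⊕ Unit) 𝕜) i (Sum.inl j)
          = (g : Matrix (Fin n ⊕ Unit) (Fin n ⊕ Unit) 𝕜) i (Sum.inl j) := by
        rw [Matrix.SpecialLinearGroup.coe_mul, Matrix.mul_apply, hX]
        rw [Fintype.sum_sum_type]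
        simp [Matrix.one_apply]
      simpa [blockMap] using this.symm
end
end
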